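/- For every natural number n and every integer q, ∑_{π ∈ Equiv.Perm (Fin n)} sign(π) · q^{c(π)} = q·(q−1)·(q−2)⋯(q−n+1) = ∏_{i=0}^{n−1} (q − i), where c(π) is the number of orbits of π acting on Fin n and sign(π) is the sign of π. -/

import Mathlib

/-- The number of cycles of a permutation `π` of `Fin n`, counting fixed points as
cycles of length 1: the number of orbits of the action of `π` on `Fin n`. -/
noncomputable def cycleCount {n : ℕ} (π : Equiv.Perm (Fin n)) : ℕ :=
  Nat.card (MulAction.orbitRel.Quotient (Subgroup.zpowers π) (Fin n))

open Equiv Finset Polynomial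

section aux

variable {n : ℕ} {β : Type*}

private lemma inv_pow_aux {f : Fin n → β} {σ : Equiv.Perm (Fin n)}
    (hf : ∀ x, f (σ x) = f x) : ∀ (m : ℕ) (x), f ((σ ^ m) x) = f x := by
  intro m
  induction m with
  | zero => simp
  | succ m ih =>
    intro x
    rw [pow_succ, Equiv.Perm.mul_apply, ih, hf]

private lemma invariant_zpow {f : Fin n → β} {π : Equiv.Perm (Fin n)}
    (hf : ∀ x, f (π x) = f x) : ∀ (k : ℤ) (x), f ((π ^ k) x) = f x := by
  have hinv : ∀ x, f (π⁻¹ x) = f x := by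
    intro x
    have := hf (π⁻¹ x)
    rw [← Equiv.Perm.mul_apply, mul_inv_cancel, Equiv.Perm.one_apply] at this
    exact this.symm
  intro k x
  cases k with
  | ofNat m => rw [Int.ofNat_eq_coe, zpow_natCast]; exact inv_pow_aux hf m x
  | negSucc m =>
    rw [zpow_negSucc, ← inv_pow]
    exact inv_pow_aux hinv (m + 1) x

/-- Invariant functions correspond to functions on the orbit quotient. -/
private def invariantEquiv (π : Equiv.Perm (Fin n)) (β : Type*) :
    (MulAction.orbitRel.Quotient (Subgroup.zpowers π) (Fin n) → β) ≃
      {f : Fin n → β // ∀ x, f (π x) = f x} where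
  toFun g := ⟨fun x => g (Quotient.mk'' x), by
    intro x
    exact congrArg g (Quotient.sound'
      (⟨⟨π, Subgroup.mem_zpowers π⟩, rfl⟩ : (π x) ∈ MulAction.orbit (Subgroup.zpowers π) x))⟩
  invFun f := Quotient.lift (f : Fin n → β) (by
    intro a b hab
    obtain ⟨⟨g, k, hk⟩, hg⟩ := (hab : a ∈ MulAction.orbit (Subgroup.zpowers π) b)
    have hk' : (π ^ k) b = a := by rw [← hg]; subst hk; rfl
    rw [← hk', invariant_zpow f.2])
  left_inv g := by
    funext x
    induction x using Quotient.inductionOn'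
    rfl
  right_inv f := rfl

private lemma pow_cycleCount (q : ℕ) (π : Equiv.Perm (Fin n)) :
    (q : ℤ) ^ cycleCount π =
      ∑ f : Fin n → Fin q, (if ∀ x, f (π x) = f x then (1 : ℤ) else 0) := by
  classical
  rw [Finset.sum_boole]
  have h1 : (Finset.univ.filter fun f : Fin n → Fin q => ∀ x, f (π x) = f x).card =
      Nat.card {f : Fin n → Fin q // ∀ x, f (π x) = f x} := by
    rw [Nat.card_eq_fintype_card, Fintype.card_subtype]
  rw [h1, ← Nat.card_eq_of_bijective _ (invariantEquiv π (Fin q)).bijective,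
    Nat.card_fun, Nat.card_eq_fintype_card (α := Fin q), Fintype.card_fin, cycleCount]
  push_cast
  ring

private lemma sign_sum_eq {q : ℕ} (f : Fin n → Fin q) :
    ∑ π : Equiv.Perm (Fin n), (if ∀ x, f (π x) = f x then (Equiv.Perm.sign π : ℤ) else 0) =
      if Function.Injective f then 1 else 0 := by
  classical
  by_cases hf : Function.Injective f
  · rw [if_pos hf, Finset.sum_eq_single 1]
    · simp
    · intro π _ hπ
      rw [if_neg]
      intro h
      exact hπ (Equiv.ext fun x => hf (h x))
    · simp
  · rw [if_neg hf]
    rw [Function.not_injective_iff] at hf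
    obtain ⟨a, b, hfab, hab⟩ := hf
    have hswap : ∀ y, f (Equiv.swap a b y) = f y := by
      intro y
      rcases eq_or_ne y a with rfl | ha
      · rw [Equiv.swap_apply_left, hfab]
      rcases eq_or_ne y b with rfl | hb
      · rw [Equiv.swap_apply_right, hfab]
      · rw [Equiv.swap_apply_of_ne_of_ne ha hb]
    have key : (∑ π : Equiv.Perm (Fin n),
          (if ∀ x, f (π x) = f x then (Equiv.Perm.sign π : ℤ) else 0)) =
        -∑ π : Equiv.Perm (Fin n),
          (if ∀ x, f (π x) = f x then (Equiv.Perm.sign π : ℤ) else 0) := by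
      conv_lhs => rw [← Equiv.sum_comp (Equiv.mulLeft (Equiv.swap a b))]
      rw [← Finset.sum_neg_distrib]
      apply Finset.sum_congr rfl
      intro π _
      have hcond : (∀ x, f ((Equiv.mulLeft (Equiv.swap a b) π) x) = f x) ↔
          (∀ x, f (π x) = f x) := by
        constructor <;> intro h x
        · have := h x
          rwa [Equiv.coe_mulLeft, Equiv.Perm.mul_apply, hswap] at this
        · rw [Equiv.coe_mulLeft, Equiv.Perm.mul_apply, hswap, h]
      rw [if_congr hcond rfl rfl]
      split_ifs with h
      · rw [Equiv.coe_mulLeft, Equiv.Perm.sign_mul, Equiv.Perm.sign_swap hab]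
        push_cast
        ring
      · rw [neg_zero]
    linarith

private lemma descFactorial_cast (q n : ℕ) :
    ((q.descFactorial n : ℤ)) = ∏ i ∈ Finset.range n, ((q : ℤ) - i) := by
  induction n with
  | zero => simp
  | succ n ih =>
    rw [Finset.prod_range_succ, ← ih, Nat.descFactorial_succ]
    rcases le_or_gt n q with h | h
    · push_cast [h]
      ring
    · rw [Nat.descFactorial_eq_zero_iff_lt.2 h]
      simp

private lemma main_nat (n q : ℕ) :
    ∑ π : Equiv.Perm (Fin n), (Equiv.Perm.sign π : ℤ) * (q : ℤ) ^ cycleCount π =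
      ∏ i ∈ Finset.range n, ((q : ℤ) - i) := by
  classical
  calc
    ∑ π : Equiv.Perm (Fin n), (Equiv.Perm.sign π : ℤ) * (q : ℤ) ^ cycleCount π =
        ∑ π : Equiv.Perm (Fin n), ∑ f : Fin n → Fin q,
          (if ∀ x, f (π x) = f x then (Equiv.Perm.sign π : ℤ) else 0) := by
      apply Finset.sum_congr rfl
      intro π _
      rw [pow_cycleCount, Finset.mul_sum]
      simp [mul_ite]
    _ = ∑ f : Fin n → Fin q, ∑ π : Equiv.Perm (Fin n),
          (if ∀ x, f (π x) = f x then (Equiv.Perm.sign π : ℤ) else 0) := Finset.sum_comm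
    _ = ∑ f : Fin n → Fin q, (if Function.Injective f then (1 : ℤ) else 0) := by
      exact Finset.sum_congr rfl fun f _ => sign_sum_eq f
    _ = ((Finset.univ.filter fun f : Fin n → Fin q => Function.Injective f).card : ℤ) := by
      rw [Finset.sum_boole]
    _ = ((q.descFactorial n : ℕ) : ℤ) := by
      congr 1
      rw [← Fintype.card_subtype, Fintype.card_congr (Equiv.subtypeInjectiveEquivEmbedding _ _),
        Fintype.card_embedding_eq, Fintype.card_fin, Fintype.card_fin]
    _ = ∏ i ∈ Finset.range n, ((q : ℤ) - i) := descFactorial_cast q n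

end aux

/-- The character polynomial for `λ = (1^n)` (sign) and `μ = (n)` (trivial):
`∑_π sign(π) q^{c(π)}` equals the falling factorial `q(q−1)⋯(q−n+1)`. -/
theorem sum_sign_mul_pow_cycleCount (n : ℕ) (q : ℤ) :
    ∑ π : Equiv.Perm (Fin n), (Equiv.Perm.sign π : ℤ) * q ^ cycleCount π =
      ∏ i ∈ Finset.range n, (q - i) := by
  classical
  set p : ℤ[X] := (∑ π : Equiv.Perm (Fin n), C ((Equiv.Perm.sign π : ℤ)) * X ^ cycleCount π) -
    ∏ i ∈ Finset.range n, (X - C (i : ℤ)) with hp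
  have heval : ∀ x : ℤ, p.eval x =
      (∑ π : Equiv.Perm (Fin n), (Equiv.Perm.sign π : ℤ) * x ^ cycleCount π) -
        ∏ i ∈ Finset.range n, (x - i) := by
    intro x
    simp [hp, eval_finset_sum, eval_prod]
  have hzero : p = 0 := by
    apply Polynomial.eq_zero_of_infinite_isRoot
    apply Set.infinite_of_injective_forall_mem (f := fun m : ℕ => (m : ℤ))
      (fun a b h => Nat.cast_injective h)
    intro m
    simp only [Set.mem_setOf_eq, IsRoot, heval]
    rw [main_nat n m, sub_self]
  have := heval q
  rw [hzero, eval_zero] at this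
  linarith
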